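/- Let d ≥ 1 be an integer, σ > 0, and let p ≥ 1 be a real number. Let μ be a Borel probability measure on ℝ with no atoms, symmetric about 0 (the pushforward of μ under z ↦ −z equals μ), and with second moment ∫ z² dμ(z) = σ². Let P = μ^{⊗d} be the d-fold product measure on ℝ^d. Then for all real numbers p₁, p₂ ∈ (0,1) with p₁ ≥ 1/2 and p₁ + p₂ ≤ 1, there exist a measurable function h : ℝ^d → {0,1,2} and points x, x' ∈ ℝ^d such that: P{Δ : h(x+Δ) = 0} = p₁, P{Δ : h(x+Δ) = 1} = p₂, (∑_{i=1}^d |x'_i − x_i|^p)^{1/p} ≤ (σ / (2·√2·d^{1/2 − 1/p})) · (1/√(1−p₁) + 1/√(p₂)), and P{Δ : h(x'+Δ) = 1} ≥ P{Δ : h(x'+Δ) = 0}. (Hence the smoothed classifier's prediction is not constant within the ℓ_p-ball of this radius, so no larger ℓ_p-radius can be certified for all classifiers with these top-two class probabilities.) -/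

import Mathlib

open scoped ENNReal
open MeasureTheory Real Set ProbabilityTheory



lemma continuous_cdf_of_noAtoms (ρ : Measure ℝ) [IsProbabilityMeasure ρ] [NullSingletonClass ρ] :
    Continuous (cdf ρ) := by
  rw [continuous_iff_continuousAt]
  intro x
  have hmono : Monotone (cdf ρ) := monotone_cdf ρ
  rw [hmono.continuousAt_iff_leftLim_eq_rightLim]
  have hright : Function.rightLim (cdf ρ) x = cdf ρ x := by
    apply StieltjesFunction.rightLim_eq
  have hsing : (cdf ρ).measure {x} = 0 := by rw [measure_cdf]; exact measure_singleton x
  rw [StieltjesFunction.measure_singleton] at hsing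
  have hle : Function.leftLim (cdf ρ) x ≤ cdf ρ x := hmono.leftLim_le le_rfl
  have : cdf ρ x - Function.leftLim (cdf ρ) x ≤ 0 := by
    by_contra hcon
    push_neg at hcon
    rw [ENNReal.ofReal_eq_zero] at hsing
    linarith
  rw [hright]
  linarith



lemma prod_if_pair {d : ℕ} (i j : Fin d) (hij : i ≠ j) (g : Fin d → ℝ) :
    ∏ k, (if k = i then g k else if k = j then g k else 1) = g i * g j := by
  classical
  have hsub : ({i, j} : Finset (Fin d)) ⊆ Finset.univ := Finset.subset_univ _
  rw [← Finset.prod_subset hsub (fun k _ hk => ?_)]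
  · rw [Finset.prod_pair hij]
    simp [hij, (Ne.symm hij)]
  · simp only [Finset.mem_insert, Finset.mem_singleton, not_or] at hk
    simp [hk.1, hk.2]

lemma integrable_coord_mul {d : ℕ} (μ : Measure ℝ) [IsProbabilityMeasure μ]
    (hid : Integrable (fun z : ℝ => z) μ) (hsq : Integrable (fun z : ℝ => z ^ 2) μ)
    (i j : Fin d) :
    Integrable (fun Δ : Fin d → ℝ => Δ i * Δ j) (Measure.pi fun _ => μ) := by
  classical
  letI : MeasureSpace ℝ := ⟨μ⟩
  have hvol : (Measure.pi fun _ : Fin d => μ) = (volume : Measure (Fin d → ℝ)) :=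
    (volume_pi ..).symm
  rw [hvol]
  by_cases hij : i = j
  · subst hij
    have : (fun Δ : Fin d → ℝ => Δ i * Δ i)
        = fun Δ : Fin d → ℝ => ∏ k, (fun k z => if k = i then z ^ 2 else 1 : Fin d → ℝ → ℝ) k (Δ k) := by
      ext Δ
      rw [Finset.prod_ite_eq' Finset.univ i (fun k => (Δ k) ^ 2)]
      simp [sq]
    rw [this]
    exact Integrable.fintype_prod (f := fun k z => if k = i then z ^ 2 else 1)
      (fun k => by by_cases h : k = i <;> simp [h, hsq, integrable_const, MeasureSpace.volume] <;> exact hsq)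
  · have : (fun Δ : Fin d → ℝ => Δ i * Δ j)
        = fun Δ : Fin d → ℝ => ∏ k, (fun k z => if k = i then z else if k = j then z else 1 : Fin d → ℝ → ℝ) k (Δ k) := by
      ext Δ
      rw [prod_if_pair i j hij (fun k => Δ k)]
    rw [this]
    exact Integrable.fintype_prod (f := fun k z => if k = i then z else if k = j then z else 1)
      (fun k => by by_cases h : k = i <;> by_cases h' : k = j <;>
        simp [h, h', hid, integrable_const, MeasureSpace.volume] <;> exact hid)

lemma integral_coord_mul {d : ℕ} (μ : Measure ℝ) [IsProbabilityMeasure μ]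
    (hmean : ∫ z, z ∂μ = 0) (i j : Fin d) :
    ∫ Δ : Fin d → ℝ, Δ i * Δ j ∂(Measure.pi fun _ => μ)
      = if i = j then ∫ z, z ^ 2 ∂μ else 0 := by
  classical
  letI : MeasureSpace ℝ := ⟨μ⟩
  have hvol : (Measure.pi fun _ : Fin d => μ) = (volume : Measure (Fin d → ℝ)) :=
    (volume_pi ..).symm
  rw [hvol]
  by_cases hij : i = j
  · subst hij
    simp only [if_pos rfl]
    have : (fun Δ : Fin d → ℝ => Δ i * Δ i)
        = fun Δ : Fin d → ℝ => ∏ k, (fun k z => if k = i then z ^ 2 else 1 : Fin d → ℝ → ℝ) k (Δ k) := by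
      ext Δ
      rw [Finset.prod_ite_eq' Finset.univ i (fun k => (Δ k) ^ 2)]
      simp [sq]
    rw [this, integral_fintype_prod_volume_eq_prod (f := fun k z => if k = i then z ^ 2 else 1)]
    have heach : ∀ k : Fin d, (∫ z : ℝ, (if k = i then z ^ 2 else 1))
        = (if k = i then (∫ z, z ^ 2 ∂μ) else 1) := by
      intro k
      by_cases h : k = i <;> simp [h, MeasureSpace.volume] <;> rfl
    rw [Finset.prod_congr rfl (fun k _ => heach k),
      Finset.prod_ite_eq' Finset.univ i (fun _ => ∫ z, z ^ 2 ∂μ)]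
    simp
  · simp only [if_neg hij]
    have : (fun Δ : Fin d → ℝ => Δ i * Δ j)
        = fun Δ : Fin d → ℝ => ∏ k, (fun k z => if k = i then z else if k = j then z else 1 : Fin d → ℝ → ℝ) k (Δ k) := by
      ext Δ
      rw [prod_if_pair i j hij (fun k => Δ k)]
    rw [this, integral_fintype_prod_volume_eq_prod (f := fun k z => if k = i then z else if k = j then z else 1)]
    have heach : ∀ k : Fin d, (∫ z : ℝ, (if k = i then z else if k = j then z else 1))
        = (if k = i then (0:ℝ) else if k = j then 0 else 1) := by
      intro k
      by_cases h : k = i <;> by_cases h' : k = j <;>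
        simp [h, h', MeasureSpace.volume, hmean] <;> exact hmean
    rw [Finset.prod_congr rfl (fun k _ => heach k), prod_if_pair i j hij (fun _ => (0:ℝ))]
    simp



lemma sum_fiber_null (n : ℕ) (μ : Measure ℝ) [IsProbabilityMeasure μ] [NullSingletonClass μ] (c : ℝ) :
    Measure.pi (fun _ : Fin (n+1) => μ) {Δ | ∑ i, Δ i = c} = 0 := by
  have hmp := measurePreserving_piFinSuccAbove (fun _ : Fin (n+1) => μ) 0
  set e := MeasurableEquiv.piFinSuccAbove (fun _ : Fin (n+1) => ℝ) 0
  have hset : {Δ : Fin (n+1) → ℝ | ∑ i, Δ i = c}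
      = e ⁻¹' {q : ℝ × (Fin n → ℝ) | q.1 + ∑ j, q.2 j = c} := by
    ext Δ
    simp only [Set.mem_setOf_eq, Set.mem_preimage]
    have h0 : (e Δ).1 = Δ 0 := rfl
    have h1 : ∀ j, (e Δ).2 j = Δ (Fin.succAbove 0 j) := fun j => rfl
    simp only [h0, h1, Fin.succAbove_zero]
    rw [Fin.sum_univ_succ]
  rw [hset, ← Measure.map_apply e.measurable (by
      exact measurableSet_eq_fun (measurable_fst.add (by fun_prop)) measurable_const),
    hmp.map_eq]
  rw [Measure.prod_apply_symm (by
      exact measurableSet_eq_fun (measurable_fst.add (by fun_prop)) measurable_const)]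
  have : ∀ y : Fin n → ℝ, μ ((fun x => (x, y)) ⁻¹' {q : ℝ × (Fin n → ℝ) | q.1 + ∑ j, q.2 j = c}) = 0 := by
    intro y
    have : ((fun x : ℝ => (x, y)) ⁻¹' {q : ℝ × (Fin n → ℝ) | q.1 + ∑ j, q.2 j = c}) = {c - ∑ j, y j} := by
      ext x; simp [Set.mem_preimage, eq_sub_iff_add_eq]
    rw [this]; exact measure_singleton _
  simp only [this, lintegral_zero]


section Main
variable {d : ℕ} {μ : Measure ℝ} [IsProbabilityMeasure μ]

/-- **Theorem 1 (general i.i.d. smoothing), counterexample form.**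
For any symmetric, atomless i.i.d. smoothing distribution with per-coordinate
variance `σ²`, and any admissible top-two class probabilities `p₁, p₂`, there is
a classifier and a pair of points within the stated `ℓ_p`-distance on which the
smoothed prediction changes. -/
theorem curse_of_dimensionality_iid_smoothing
    (d : ℕ) (hd : 1 ≤ d) (σ : ℝ) (hσ : 0 < σ) (p : ℝ) (hp : 1 ≤ p)
    (μ : Measure ℝ) [IsProbabilityMeasure μ] [NullSingletonClass μ]
    (hsym : Measure.map (fun z : ℝ => -z) μ = μ)
    (hvar : ∫ z, z ^ 2 ∂μ = σ ^ 2)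
    (p₁ p₂ : ℝ) (hp₁ : p₁ ∈ Set.Ioo (0 : ℝ) 1) (hp₂ : p₂ ∈ Set.Ioo (0 : ℝ) 1)
    (hhalf : 1 / 2 ≤ p₁) (hsum : p₁ + p₂ ≤ 1) :
    ∃ (h : (Fin d → ℝ) → Fin 3) (x x' : Fin d → ℝ),
      Measurable h ∧
      Measure.pi (fun _ : Fin d => μ) {Δ | h (x + Δ) = 0} = ENNReal.ofReal p₁ ∧
      Measure.pi (fun _ : Fin d => μ) {Δ | h (x + Δ) = 1} = ENNReal.ofReal p₂ ∧
      (∑ i, |x' i - x i| ^ p) ^ (1 / p) ≤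
        σ / (2 * Real.sqrt 2 * (d : ℝ) ^ ((1 : ℝ) / 2 - 1 / p)) *
          (1 / Real.sqrt (1 - p₁) + 1 / Real.sqrt p₂) ∧
      Measure.pi (fun _ : Fin d => μ) {Δ | h (x' + Δ) = 0} ≤
        Measure.pi (fun _ : Fin d => μ) {Δ | h (x' + Δ) = 1} := by
  classical
  set P : Measure (Fin d → ℝ) := Measure.pi (fun _ : Fin d => μ) with hP
  set S : (Fin d → ℝ) → ℝ := fun Δ => ∑ i, Δ i with hSdef
  have hS : Measurable S := Finset.measurable_sum _ (fun i _ => measurable_pi_apply i)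
  set ν : Measure ℝ := P.map S with hν
  haveI : IsProbabilityMeasure ν := Measure.isProbabilityMeasure_map hS.aemeasurable
  -- integrability
  have hsq : Integrable (fun z : ℝ => z ^ 2) μ := by
    by_contra hcon
    rw [integral_undef hcon] at hvar
    exact absurd hvar.symm (ne_of_gt (pow_pos hσ 2))
  have hid : Integrable (fun z : ℝ => z) μ := by
    have : MemLp (fun z : ℝ => z) 2 μ :=
      (memLp_two_iff_integrable_sq aestronglyMeasurable_id).2 (by simpa [sq] using hsq)
    exact this.integrable one_le_two
  have hmean : ∫ z, z ∂μ = 0 := by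
    have h1 : ∫ z, z ∂μ = ∫ z, z ∂(Measure.map (fun z : ℝ => -z) μ) := by rw [hsym]
    have h2 : ∫ z, z ∂(Measure.map (fun z : ℝ => -z) μ) = ∫ z, -z ∂μ :=
      integral_map (φ := fun z : ℝ => -z) (f := fun z : ℝ => z)
        measurable_neg.aemeasurable measurable_id.aestronglyMeasurable
    rw [h2, integral_neg] at h1
    linarith [h1]
  -- ν has no atoms
  haveI hνatom : NullSingletonClass ν := by
    constructor
    intro c
    rw [hν, Measure.map_apply hS (measurableSet_singleton c)]
    obtain ⟨n, rfl⟩ : ∃ n, d = n + 1 := ⟨d - 1, (Nat.succ_pred_eq_of_pos hd).symm⟩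
    have : S ⁻¹' {c} = {Δ : Fin (n+1) → ℝ | ∑ i, Δ i = c} := rfl
    rw [this]
    exact sum_fiber_null n μ c
  -- ν symmetric
  have hνsym : ν.map (fun z : ℝ => -z) = ν := by
    have hpneg : Measure.map (fun Δ : Fin d → ℝ => fun i => -(Δ i)) P = P :=
      (measurePreserving_pi (fun _ => μ) (fun _ => μ)
        (fun i => ⟨measurable_neg, hsym⟩)).map_eq
    rw [hν, Measure.map_map measurable_neg hS]
    have : ((fun z : ℝ => -z) ∘ S) = S ∘ (fun Δ : Fin d → ℝ => fun i => -(Δ i)) := by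
      funext Δ
      simp [hSdef, Function.comp, Finset.sum_neg_distrib]
    rw [this, ← Measure.map_map hS (by fun_prop), hpneg]
  have hIicIci : ∀ t : ℝ, ν (Iic (-t)) = ν (Ici t) := by
    intro t
    conv_rhs => rw [← hνsym]
    rw [Measure.map_apply measurable_neg measurableSet_Ici]
    congr 1
    ext z
    simp [le_neg]
  have hIoiIci : ∀ t : ℝ, ν (Ioi t) = ν (Ici t) := fun t => measure_congr (Ioi_ae_eq_Ici)
  have hIciCompl : ∀ t : ℝ, ν (Ici t) = 1 - ν (Iic t) := by
    intro t
    rw [← hIoiIci]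
    have : Ioi t = (Iic t)ᶜ := by simp
    rw [this, measure_compl measurableSet_Iic (measure_ne_top _ _), measure_univ]
  -- cdf facts
  have hFcont : Continuous (cdf ν) := continuous_cdf_of_noAtoms ν
  have hFmono : Monotone (cdf ν) := monotone_cdf ν
  have hofF : ∀ t, ENNReal.ofReal (cdf ν t) = ν (Iic t) := fun t => ofReal_cdf ν t
  have hF0 : cdf ν 0 = 1/2 := by
    have h1 : ν (Iic 0) = ν (Ici 0) := by rw [← hIicIci 0, neg_zero]
    have h2 := hIciCompl 0
    rw [← h1] at h2
    have h3 : (ν (Iic 0)).toReal = 1 - (ν (Iic 0)).toReal := by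
      conv_lhs => rw [h2]
      rw [ENNReal.toReal_sub_of_le prob_le_one ENNReal.one_ne_top, ENNReal.toReal_one]
    have h4 : cdf ν 0 = (ν (Iic 0)).toReal := cdf_eq_real ν 0
    rw [h4]
    linarith
  have hexists : ∀ q : ℝ, 1/2 ≤ q → q < 1 → ∃ t, 0 ≤ t ∧ cdf ν t = q := by
    intro q hq hq1
    obtain ⟨M, hM⟩ := ((tendsto_cdf_atTop ν).eventually (eventually_ge_nhds hq1)).exists
    have hM' : q ≤ cdf ν (max M 0) := le_trans hM (hFmono (le_max_left _ _))
    have h0M : (0:ℝ) ≤ max M 0 := le_max_right _ _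
    have hmem : q ∈ Icc (cdf ν 0) (cdf ν (max M 0)) := ⟨by rw [hF0]; exact hq, hM'⟩
    obtain ⟨t, ht, hFt⟩ := intermediate_value_Icc h0M hFcont.continuousOn hmem
    exact ⟨t, ht.1, hFt⟩
  obtain ⟨a, ha0, hFa⟩ := hexists p₁ hhalf hp₁.2
  obtain ⟨b₀, hb₀0, hFb₀⟩ := hexists (1 - p₂) (by linarith [hp₂.2, hp₁.1]) (by linarith [hp₂.1])
  set b := max a b₀ with hbdef
  have hab : a ≤ b := le_max_left _ _
  have hb0 : 0 ≤ b := le_trans ha0 hab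
  have hFb : cdf ν b = 1 - p₂ := by
    rcases max_cases a b₀ with ⟨h1, h2⟩ | ⟨h1, h2⟩
    · have h3 : cdf ν b₀ ≤ cdf ν a := hFmono h2
      rw [hFa, hFb₀] at h3
      rw [hbdef, h1, hFa]
      linarith
    · rw [hbdef, h1, hFb₀]
  have hIica : ν (Iic a) = ENNReal.ofReal p₁ := by rw [← hofF, hFa]
  have hIicb : ν (Iic b) = ENNReal.ofReal (1 - p₂) := by rw [← hofF, hFb]
  have hIcia : ν (Ici a) = ENNReal.ofReal (1 - p₁) := by
    rw [hIciCompl, hIica, ← ENNReal.ofReal_one,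
      ← ENNReal.ofReal_sub _ (le_of_lt hp₁.1)]
  have hIcib : ν (Ici b) = ENNReal.ofReal p₂ := by
    rw [hIciCompl, hIicb, ← ENNReal.ofReal_one,
      ← ENNReal.ofReal_sub _ (by linarith [hp₂.2])]
    norm_num
  -- second moment of the sum
  have hsum_expand : (fun Δ : Fin d → ℝ => (S Δ)^2) = fun Δ => ∑ i, ∑ j, Δ i * Δ j := by
    funext Δ
    rw [hSdef]
    simp only
    rw [sq, Finset.sum_mul_sum]
  have hSint : Integrable (fun Δ => (S Δ)^2) P := by
    rw [hsum_expand]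
    exact integrable_finset_sum _ (fun i _ => integrable_finset_sum _
      (fun j _ => integrable_coord_mul μ hid hsq i j))
  have hSsq : ∫ Δ, (S Δ)^2 ∂P = d * σ^2 := by
    rw [hsum_expand, integral_finset_sum _ (fun i _ => integrable_finset_sum _
      (fun j _ => integrable_coord_mul μ hid hsq i j))]
    have : ∀ i : Fin d, ∫ Δ : Fin d → ℝ, ∑ j, Δ i * Δ j ∂P = σ^2 := by
      intro i
      rw [integral_finset_sum _ (fun j _ => integrable_coord_mul μ hid hsq i j)]
      have heach : ∀ j : Fin d, ∫ Δ : Fin d → ℝ, Δ i * Δ j ∂P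
          = if i = j then σ^2 else 0 := by
        intro j
        rw [integral_coord_mul μ hmean i j, hvar]
      rw [Finset.sum_congr rfl (fun j _ => heach j), Finset.sum_ite_eq Finset.univ i (fun _ => σ^2)]
      simp
    rw [Finset.sum_congr rfl (fun i _ => this i)]
    simp [mul_comm]
  -- Chebyshev
  have hcheb : ∀ c : ℝ, 0 < c →
      ENNReal.ofReal (c^2) * (2 * ν (Ici c)) ≤ ENNReal.ofReal (d * σ^2) := by
    intro c hc
    have hA : ν (Ici c) = P (S ⁻¹' Ici c) := Measure.map_apply hS measurableSet_Ici
    have hB : ν (Iic (-c)) = P (S ⁻¹' Iic (-c)) := Measure.map_apply hS measurableSet_Iic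
    have h2 : 2 * ν (Ici c) = P (S ⁻¹' Ici c) + P (S ⁻¹' Iic (-c)) := by
      rw [two_mul]
      nth_rewrite 2 [← hIicIci c]
      rw [hA, hB]
    have hdisj : Disjoint (S ⁻¹' Ici c) (S ⁻¹' Iic (-c)) := by
      rw [Set.disjoint_left]
      intro Δ h1 h2
      simp only [Set.mem_preimage, Set.mem_Ici, Set.mem_Iic] at h1 h2
      linarith
    have hunion : P (S ⁻¹' Ici c) + P (S ⁻¹' Iic (-c))
        = P (S ⁻¹' Ici c ∪ S ⁻¹' Iic (-c)) :=
      (measure_union hdisj (hS measurableSet_Iic)).symm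
    have hsub : S ⁻¹' Ici c ∪ S ⁻¹' Iic (-c)
        ⊆ {Δ | ENNReal.ofReal (c^2) ≤ ENNReal.ofReal ((S Δ)^2)} := by
      intro Δ hΔ
      have habs : c ≤ |S Δ| := by
        rcases hΔ with h1 | h1 <;> simp only [Set.mem_preimage, Set.mem_Ici, Set.mem_Iic] at h1
        · exact le_trans h1 (le_abs_self _)
        · calc c ≤ -(S Δ) := by linarith
            _ ≤ |S Δ| := neg_le_abs _
      apply ENNReal.ofReal_le_ofReal
      calc c^2 = |c|^2 := by rw [abs_of_nonneg hc.le]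
        _ ≤ |S Δ|^2 := by
            apply pow_le_pow_left₀ (abs_nonneg c)
            rw [abs_of_nonneg hc.le]
            exact habs
        _ = (S Δ)^2 := sq_abs _
    calc ENNReal.ofReal (c^2) * (2 * ν (Ici c))
        = ENNReal.ofReal (c^2) * P (S ⁻¹' Ici c ∪ S ⁻¹' Iic (-c)) := by rw [h2, hunion]
      _ ≤ ENNReal.ofReal (c^2)
          * P {Δ | ENNReal.ofReal (c^2) ≤ ENNReal.ofReal ((S Δ)^2)} :=
          mul_le_mul_right (measure_mono hsub) _
      _ ≤ ∫⁻ Δ, ENNReal.ofReal ((S Δ)^2) ∂P :=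
          mul_meas_ge_le_lintegral₀
            ((ENNReal.measurable_ofReal.comp (hS.pow_const 2)).aemeasurable) _
      _ = ENNReal.ofReal (∫ Δ, (S Δ)^2 ∂P) :=
          (ofReal_integral_eq_lintegral_ofReal hSint
            (Filter.Eventually.of_forall fun Δ => sq_nonneg _)).symm
      _ = ENNReal.ofReal (d * σ^2) := by rw [hSsq]
  have hbound : ∀ c q : ℝ, 0 ≤ c → 0 < q → ν (Ici c) = ENNReal.ofReal q →
      c ≤ σ * Real.sqrt d / (Real.sqrt 2 * Real.sqrt q) := by
    intro c q hc hq hval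
    rw [le_div_iff₀ (by positivity)]
    rcases eq_or_lt_of_le hc with rfl | hc
    · simp only [zero_mul]
      positivity
    · have hcb := hcheb c hc
      rw [hval] at hcb
      have h2q : (2:ℝ≥0∞) * ENNReal.ofReal q = ENNReal.ofReal (2*q) := by
        rw [ENNReal.ofReal_mul (by norm_num : (0:ℝ) ≤ 2)]
        norm_num
      rw [h2q, ← ENNReal.ofReal_mul (by positivity)] at hcb
      have hreal : c^2 * (2*q) ≤ d * σ^2 :=
        (ENNReal.ofReal_le_ofReal_iff (by positivity)).1 hcb
      have hsq2 : (c * (Real.sqrt 2 * Real.sqrt q))^2 ≤ (σ * Real.sqrt d)^2 := by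
        have e1 : (c * (Real.sqrt 2 * Real.sqrt q))^2 = c^2 * (2*q) := by
          rw [mul_pow, mul_pow, Real.sq_sqrt (by norm_num : (0:ℝ) ≤ 2), Real.sq_sqrt hq.le]
        have e2 : (σ * Real.sqrt d)^2 = σ^2 * d := by
          rw [mul_pow, Real.sq_sqrt (Nat.cast_nonneg d)]
        rw [e1, e2]
        linarith
      calc c * (Real.sqrt 2 * Real.sqrt q)
          = Real.sqrt ((c * (Real.sqrt 2 * Real.sqrt q))^2) := (Real.sqrt_sq (by positivity)).symm
        _ ≤ Real.sqrt ((σ * Real.sqrt d)^2) := Real.sqrt_le_sqrt hsq2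
        _ = σ * Real.sqrt d := Real.sqrt_sq (by positivity)
  have haB : a ≤ σ * Real.sqrt d / (Real.sqrt 2 * Real.sqrt (1-p₁)) :=
    hbound a (1-p₁) ha0 (by linarith [hp₁.2]) hIcia
  have hbB : b ≤ σ * Real.sqrt d / (Real.sqrt 2 * Real.sqrt p₂) :=
    hbound b p₂ hb0 hp₂.1 hIcib
  -- construction
  set m : ℝ := (a + b)/2 with hm
  have hm0 : 0 ≤ m := by rw [hm]; positivity
  have hd0 : (0:ℝ) < d := by exact_mod_cast Nat.lt_of_lt_of_le Nat.zero_lt_one hd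
  set t : ℝ := m / d with ht
  have ht0 : 0 ≤ t := div_nonneg hm0 hd0.le
  have hSshift : ∀ Δ : Fin d → ℝ, S ((fun _ => t) + Δ) = m + S Δ := by
    intro Δ
    rw [hSdef]
    simp only [Pi.add_apply]
    rw [Finset.sum_add_distrib, Finset.sum_const, Finset.card_univ, Fintype.card_fin,
      nsmul_eq_mul, ht, mul_comm, div_mul_cancel₀ m hd0.ne']
  refine ⟨fun y => if S y ≤ a then 0 else if b ≤ S y then 1 else 2, 0, fun _ => t,
    ?_, ?_, ?_, ?_, ?_⟩
  · exact Measurable.ite (measurableSet_le hS measurable_const) measurable_const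
      (Measurable.ite (measurableSet_le measurable_const hS) measurable_const measurable_const)
  · have hset0 : {Δ : Fin d → ℝ |
        (if S (0 + Δ) ≤ a then (0 : Fin 3) else if b ≤ S (0 + Δ) then 1 else 2) = 0}
        = S ⁻¹' Iic a := by
      ext Δ
      simp only [zero_add, Set.mem_setOf_eq, Set.mem_preimage, Set.mem_Iic]
      split_ifs with h1 h2 <;> simp [h1]
    rw [hset0, ← Measure.map_apply hS measurableSet_Iic]
    exact hIica
  · have hset1 : {Δ : Fin d → ℝ |
        (if S (0 + Δ) ≤ a then (0 : Fin 3) else if b ≤ S (0 + Δ) then 1 else 2) = 1}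
        = {Δ : Fin d → ℝ | a < S Δ ∧ b ≤ S Δ} := by
      ext Δ
      simp only [zero_add, Set.mem_setOf_eq]
      split_ifs with h1 h2
      · simp [show ¬ (a < S Δ) from not_lt.2 h1]
      · simp [not_le.1 h1, h2]
      · simp [h2]
    rw [hset1]
    apply le_antisymm
    · have hup : {Δ : Fin d → ℝ | a < S Δ ∧ b ≤ S Δ} ⊆ S ⁻¹' Ici b := fun Δ hΔ => hΔ.2
      calc P {Δ : Fin d → ℝ | a < S Δ ∧ b ≤ S Δ} ≤ P (S ⁻¹' Ici b) := measure_mono hup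
        _ = ν (Ici b) := (Measure.map_apply hS measurableSet_Ici).symm
        _ = ENNReal.ofReal p₂ := hIcib
    · have hlo : S ⁻¹' Ioi b ⊆ {Δ : Fin d → ℝ | a < S Δ ∧ b ≤ S Δ} := by
        intro Δ hΔ
        simp only [Set.mem_preimage, Set.mem_Ioi] at hΔ
        exact ⟨lt_of_le_of_lt hab hΔ, hΔ.le⟩
      calc ENNReal.ofReal p₂ = ν (Ici b) := hIcib.symm
        _ = ν (Ioi b) := (hIoiIci b).symm
        _ = P (S ⁻¹' Ioi b) := Measure.map_apply hS measurableSet_Ioi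
        _ ≤ P {Δ : Fin d → ℝ | a < S Δ ∧ b ≤ S Δ} := measure_mono hlo
  · -- the distance bound
    have hp0 : p ≠ 0 := by linarith
    have hsum_eq : ∑ i : Fin d, |(fun _ : Fin d => t) i - (0 : Fin d → ℝ) i| ^ p
        = (d : ℝ) * t ^ p := by
      simp only [Pi.zero_apply, sub_zero, abs_of_nonneg ht0]
      rw [Finset.sum_const, Finset.card_univ, Fintype.card_fin, nsmul_eq_mul]
    rw [hsum_eq]
    have hlhs : ((d : ℝ) * t ^ p) ^ ((1:ℝ)/p) = m * (d:ℝ) ^ ((1:ℝ)/p - 1) := by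
      rw [Real.mul_rpow hd0.le (Real.rpow_nonneg ht0 p), ← Real.rpow_mul ht0,
        mul_one_div_cancel hp0, Real.rpow_one, ht, Real.rpow_sub hd0, Real.rpow_one]
      ring
    rw [hlhs]
    set K : ℝ := 1 / Real.sqrt (1 - p₁) + 1 / Real.sqrt p₂ with hK
    have hs1 : (0:ℝ) < Real.sqrt (1 - p₁) := Real.sqrt_pos.2 (by linarith [hp₁.2])
    have hs2 : (0:ℝ) < Real.sqrt p₂ := Real.sqrt_pos.2 hp₂.1
    have hs2' : (0:ℝ) < Real.sqrt 2 := Real.sqrt_pos.2 (by norm_num)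
    have hmB : m ≤ σ * Real.sqrt d / (2 * Real.sqrt 2) * K := by
      have h1 : a + b ≤ σ * Real.sqrt d / (Real.sqrt 2 * Real.sqrt (1-p₁))
          + σ * Real.sqrt d / (Real.sqrt 2 * Real.sqrt p₂) := add_le_add haB hbB
      have h2 : σ * Real.sqrt d / (2 * Real.sqrt 2) * K
          = (σ * Real.sqrt d / (Real.sqrt 2 * Real.sqrt (1-p₁))
            + σ * Real.sqrt d / (Real.sqrt 2 * Real.sqrt p₂)) / 2 := by
        rw [hK]
        field_simp
      rw [hm, h2]
      linarith
    have hrhs : σ / (2 * Real.sqrt 2 * (d:ℝ) ^ ((1:ℝ)/2 - 1/p)) * K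
        = σ * Real.sqrt d / (2 * Real.sqrt 2) * K * (d:ℝ) ^ ((1:ℝ)/p - 1) := by
      have hsd : Real.sqrt d = (d:ℝ) ^ ((1:ℝ)/2) := by
        rw [Real.sqrt_eq_rpow]
      have hinv : ((d:ℝ) ^ ((1:ℝ)/2 - 1/p))⁻¹
          = (d:ℝ) ^ ((1:ℝ)/2) * (d:ℝ) ^ ((1:ℝ)/p - 1) := by
        rw [← Real.rpow_add hd0, ← Real.rpow_neg hd0.le]
        congr 1
        ring
      calc σ / (2 * Real.sqrt 2 * (d:ℝ) ^ ((1:ℝ)/2 - 1/p)) * K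
          = σ * K / (2 * Real.sqrt 2) * ((d:ℝ) ^ ((1:ℝ)/2 - 1/p))⁻¹ := by ring
        _ = σ * K / (2 * Real.sqrt 2) * ((d:ℝ) ^ ((1:ℝ)/2) * (d:ℝ) ^ ((1:ℝ)/p - 1)) := by
            rw [hinv]
        _ = σ * ((d:ℝ) ^ ((1:ℝ)/2)) / (2 * Real.sqrt 2) * K * (d:ℝ) ^ ((1:ℝ)/p - 1) := by ring
        _ = σ * Real.sqrt d / (2 * Real.sqrt 2) * K * (d:ℝ) ^ ((1:ℝ)/p - 1) := by rw [hsd]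
    rw [hrhs]
    exact mul_le_mul_of_nonneg_right hmB (Real.rpow_nonneg hd0.le _)
  · -- prediction flips at x'
    have hset0' : {Δ : Fin d → ℝ |
        (if S ((fun _ => t) + Δ) ≤ a then (0 : Fin 3)
          else if b ≤ S ((fun _ => t) + Δ) then 1 else 2) = 0}
        = S ⁻¹' Iic (a - m) := by
      ext Δ
      simp only [Set.mem_setOf_eq, Set.mem_preimage, Set.mem_Iic, hSshift Δ]
      split_ifs with h1 h2
      · simp only [Fin.isValue, true_iff]
        linarith
      · have hne : ¬ (S Δ ≤ a - m) := by
          push_neg at h1 ⊢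
          linarith
        simp [hne]
      · have hne : ¬ (S Δ ≤ a - m) := by
          push_neg at h1 ⊢
          linarith
        simp [hne]
    have hlo' : S ⁻¹' Ioi (b - m) ⊆ {Δ : Fin d → ℝ |
        (if S ((fun _ => t) + Δ) ≤ a then (0 : Fin 3)
          else if b ≤ S ((fun _ => t) + Δ) then 1 else 2) = 1} := by
      intro Δ hΔ
      simp only [Set.mem_preimage, Set.mem_Ioi] at hΔ
      simp only [Set.mem_setOf_eq, hSshift Δ]
      have h1 : ¬ (m + S Δ ≤ a) := by
        push_neg
        have : b < m + S Δ := by linarith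
        linarith [hab]
      have h2 : b ≤ m + S Δ := by linarith
      simp [h1, h2]
    have hkey : a - m = -(b - m) := by rw [hm]; ring
    calc P {Δ : Fin d → ℝ |
        (if S ((fun _ => t) + Δ) ≤ a then (0 : Fin 3)
          else if b ≤ S ((fun _ => t) + Δ) then 1 else 2) = 0}
        = ν (Iic (a - m)) := by
          rw [hset0', ← Measure.map_apply hS measurableSet_Iic]
      _ = ν (Ici (b - m)) := by rw [hkey, hIicIci]
      _ = ν (Ioi (b - m)) := (hIoiIci _).symm
      _ = P (S ⁻¹' Ioi (b - m)) := Measure.map_apply hS measurableSet_Ioi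
      _ ≤ _ := measure_mono hlo'
end Main
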